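/- Let S and T be finite sets of nonnegative integers such that for every i ∈ {1,...,n} there exist s ∈ S, t ∈ T with i dividing s − t. Let q be a prime power and let f ∈ F_q[X] be a monic squarefree polynomial of degree n. Then f divides ∏_{s ∈ S, t ∈ T} (X^{q^s} − X^{q^t}). -/

import Mathlib

open Polynomial

lemma aux_irred_dvd {F : Type*} [Field F] [Fintype F] {g : F[X]} (hm : g.Monic)
    (hi : Irreducible g) {m : ℕ} (hd : g.natDegree ∣ m) :
    g ∣ (X ^ (Fintype.card F) ^ m - X : F[X]) := by
  haveI : Fact (Irreducible g) := ⟨hi⟩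
  obtain ⟨c, rfl⟩ := hd
  have hne := hm.ne_zero
  haveI : Module.Finite F (AdjoinRoot g) := (AdjoinRoot.powerBasis hne).finite
  haveI : Finite (AdjoinRoot g) := Module.finite_of_finite F
  haveI : Fintype (AdjoinRoot g) := Fintype.ofFinite _
  have hcard : Fintype.card (AdjoinRoot g) = Fintype.card F ^ g.natDegree := by
    rw [Module.card_eq_pow_finrank (K := F) (V := AdjoinRoot g)]
    congr 1
    rw [(AdjoinRoot.powerBasis hne).finrank, AdjoinRoot.powerBasis_dim hne]
  have hroot : (AdjoinRoot.root g) ^ Fintype.card F ^ (g.natDegree * c)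
      = AdjoinRoot.root g := by
    rw [pow_mul, ← hcard]
    exact FiniteField.pow_card_pow c _
  have h0 : (Polynomial.aeval (AdjoinRoot.root g))
      (X ^ (Fintype.card F) ^ (g.natDegree * c) - X : F[X]) = 0 := by
    simp [hroot]
  have hmin : minpoly F (AdjoinRoot.root g) = g := by
    rw [AdjoinRoot.minpoly_root hne, hm.leadingCoeff, inv_one, map_one, mul_one]
  have := minpoly.dvd F _ h0
  rwa [hmin] at this

lemma aux_dvd_term {F : Type*} [Field F] [Fintype F] {g : F[X]} (hm : g.Monic)
    (hi : Irreducible g) {s t : ℕ} (hts : t ≤ s) (hd : g.natDegree ∣ (s - t)) :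
    g ∣ (X ^ (Fintype.card F) ^ s - X ^ (Fintype.card F) ^ t : F[X]) := by
  have h1 : g ∣ (X ^ (Fintype.card F) ^ (s - t) - X : F[X]) := aux_irred_dvd hm hi hd
  refine h1.trans ?_
  have h2 := sub_dvd_pow_sub_pow (X ^ (Fintype.card F) ^ (s - t) : F[X]) X
    ((Fintype.card F) ^ t)
  rwa [← pow_mul, ← pow_add, Nat.sub_add_cancel hts] at h2

theorem stmt19 (F : Type*) [Field F] [Fintype F] (n : ℕ) (hn : 1 ≤ n)
    (S T : Finset ℕ)
    (hdiv : ∀ i ∈ Finset.Icc 1 n, ∃ s ∈ S, ∃ t ∈ T, (i : ℤ) ∣ (s : ℤ) - t)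
    (f : F[X]) (hmonic : f.Monic) (hsq : Squarefree f) (hdeg : f.natDegree = n) :
    f ∣ ∏ s ∈ S, ∏ t ∈ T,
      (X ^ (Fintype.card F) ^ s - X ^ (Fintype.card F) ^ t : F[X]) := by
  classical
  have hf0 : f ≠ 0 := hmonic.ne_zero
  -- each normalized factor divides the big product
  have key : ∀ g ∈ (UniqueFactorizationMonoid.normalizedFactors f).toFinset,
      g ∣ ∏ s ∈ S, ∏ t ∈ T,
        (X ^ (Fintype.card F) ^ s - X ^ (Fintype.card F) ^ t : F[X]) := by
    intro g hg
    rw [Multiset.mem_toFinset] at hg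
    have hgi : Irreducible g :=
      UniqueFactorizationMonoid.irreducible_of_normalized_factor g hg
    have hgm : g.Monic := by
      have := Polynomial.monic_normalize (p := g) hgi.ne_zero
      rwa [UniqueFactorizationMonoid.normalize_normalized_factor g hg] at this
    have hgdvd : g ∣ f := UniqueFactorizationMonoid.dvd_of_mem_normalizedFactors hg
    have hd1 : 1 ≤ g.natDegree := hgi.natDegree_pos
    have hdn : g.natDegree ≤ n := hdeg ▸ Polynomial.natDegree_le_of_dvd hgdvd hf0
    obtain ⟨s, hs, t, ht, hst⟩ := hdiv g.natDegree (Finset.mem_Icc.mpr ⟨hd1, hdn⟩)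
    have hterm : g ∣ (X ^ (Fintype.card F) ^ s - X ^ (Fintype.card F) ^ t : F[X]) := by
      rcases le_total t s with h | h
      · refine aux_dvd_term hgm hgi h ?_
        have : ((g.natDegree : ℤ)) ∣ ((s - t : ℕ) : ℤ) := by
          rwa [Int.ofNat_sub h]
        exact_mod_cast this
      · have : g ∣ (X ^ (Fintype.card F) ^ t - X ^ (Fintype.card F) ^ s : F[X]) := by
          refine aux_dvd_term hgm hgi h ?_
          have : ((g.natDegree : ℤ)) ∣ ((t - s : ℕ) : ℤ) := by
            rw [Int.ofNat_sub h]
            have := hst.neg_right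
            rwa [neg_sub] at this
          exact_mod_cast this
        have := this.neg_right
        rwa [neg_sub] at this
    refine hterm.trans ?_
    exact dvd_trans
      (Finset.dvd_prod_of_mem (fun t => (X ^ (Fintype.card F) ^ s
        - X ^ (Fintype.card F) ^ t : F[X])) ht)
      (Finset.dvd_prod_of_mem (fun s => ∏ t ∈ T, (X ^ (Fintype.card F) ^ s
        - X ^ (Fintype.card F) ^ t : F[X])) hs)
  -- pairwise coprime
  have hpair : (↑(UniqueFactorizationMonoid.normalizedFactors f).toFinset : Set F[X]).Pairwise
      (Function.onFun IsCoprime (id : F[X] → F[X])) := by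
    intro p hp q hq hpq
    simp only [Multiset.mem_toFinset, Finset.coe_sort_coe, Finset.mem_coe] at hp hq
    have hpi : Irreducible p := UniqueFactorizationMonoid.irreducible_of_normalized_factor p hp
    have hqi : Irreducible q := UniqueFactorizationMonoid.irreducible_of_normalized_factor q hq
    refine (hpi.coprime_iff_not_dvd).mpr fun hdvd => hpq ?_
    have hass : Associated p q := hpi.associated_of_dvd hqi hdvd
    calc p = normalize p := (UniqueFactorizationMonoid.normalize_normalized_factor p hp).symm
    _ = normalize q := normalize_eq_normalize hass.dvd hass.symm.dvd
    _ = q := UniqueFactorizationMonoid.normalize_normalized_factor q hq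
  have hdvdP := Finset.prod_dvd_of_coprime hpair key
  -- f is associated to the product of its (distinct) normalized factors
  have hnodup : (UniqueFactorizationMonoid.normalizedFactors f).Nodup :=
    (UniqueFactorizationMonoid.squarefree_iff_nodup_normalizedFactors hf0).mp hsq
  have hprod : ∏ g ∈ (UniqueFactorizationMonoid.normalizedFactors f).toFinset, id g
      = (UniqueFactorizationMonoid.normalizedFactors f).prod := by
    rw [Finset.prod]
    simp only [Multiset.toFinset_val, Multiset.dedup_eq_self.mpr hnodup, id, Multiset.map_id']
  have hass : Associated (UniqueFactorizationMonoid.normalizedFactors f).prod f :=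
    UniqueFactorizationMonoid.prod_normalizedFactors hf0
  exact (hass.symm.dvd).trans (hprod ▸ hdvdP)
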